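/- Let M > 0 and r₀ ∈ (0, 2M). Let b ∈ (0, ∞], and let γ = (t, x) : [0, b) → ℝ × ℝ³ be a C¹ curve with 0 < ‖x(τ)‖ < 2M, Q_M(t'(τ), x'(τ), x(τ)) = −1, and ⟨x(τ), x'(τ)⟩ > 0 for every τ ∈ [0, b), with ‖x(0)‖ < r₀. Assume γ is past-inextensible: if b < ∞, there is no continuous map γ̄ : [0, b] → ℝ × ℝ³ extending γ whose value at b has spatial part of norm strictly between 0 and 2M. Then there exists τ ∈ (0, b) with ‖x(τ)‖ = r₀; i.e., every past-inextensible unit-speed timelike curve starting in the region ‖x‖ < r₀ intersects the hypersurface S_{r₀} := {(t,x) ∈ M_Sch : ‖x‖ = r₀}. -/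

import Mathlib

open Set Filter Topology

lemma Qkey (M r T n p : ℝ) (h1 : 0 < r) (h2 : r < 2*M)
    (hQ : (2*M/r - 1)*T^2 + n^2 - (2*M/((2*M - r)*r^2))*p^2 = -1)
    (hcs : p^2 ≤ r^2*n^2) :
    r*(2*M-r) ≤ p^2 ∧ (2*M-r)^2*r*T^2 ≤ 2*M*p^2 ∧ (2*M-r)*r^2*n^2 ≤ 2*M*p^2 := by
  have hr0 : r ≠ 0 := ne_of_gt h1
  have h2' : 0 < 2*M - r := by linarith
  have h2'' : (2*M - r) ≠ 0 := ne_of_gt h2'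
  field_simp at hQ
  have P : (2*M-r)^2*r*T^2 + (2*M-r)*r^2*n^2 - 2*M*p^2 = -((2*M-r)*r^2) := by
    nlinarith [hQ, sq_nonneg r]
  refine ⟨?_, ?_, ?_⟩
  · nlinarith [sq_nonneg T, mul_pos h2' h1, sq_nonneg (T*(2*M-r))]
  · nlinarith [mul_pos h2' (mul_pos h1 h1), sq_nonneg n,
      mul_nonneg (mul_nonneg h2'.le (mul_pos h1 h1).le) (sq_nonneg n)]
  · nlinarith [mul_nonneg (mul_nonneg (sq_nonneg (2*M-r)) h1.le) (sq_nonneg T)]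

lemma Bkey (M ρ r₀ r T n p : ℝ) (hM : 0 < M) (hρ : 0 < ρ) (hρr : ρ ≤ r) (hrr₀ : r ≤ r₀)
    (hr₀2M : r₀ < 2*M) (hp : 0 < p) (hn : 0 ≤ n)
    (h1 : r*(2*M-r) ≤ p^2) (h2 : (2*M-r)^2*r*T^2 ≤ 2*M*p^2) (h3 : (2*M-r)*r^2*n^2 ≤ 2*M*p^2) :
    Real.sqrt (ρ*(2*M-r₀)) ≤ p ∧ |T| ≤ (Real.sqrt (2*M/ρ)/(2*M-r₀)) * p ∧
      n ≤ Real.sqrt (2*M/((2*M-r₀)*ρ^2)) * p := by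
  have h2M : 0 < 2*M - r₀ := by linarith
  have h2Mr : 0 < 2*M - r := by linarith
  have hr : 0 < r := lt_of_lt_of_le hρ hρr
  have e1 : (2*M-r₀)^2 ≤ (2*M-r)^2 := by nlinarith
  refine ⟨?_, ?_, ?_⟩
  · have : ρ*(2*M-r₀) ≤ p^2 := by nlinarith
    calc Real.sqrt (ρ*(2*M-r₀)) ≤ Real.sqrt (p^2) := Real.sqrt_le_sqrt this
    _ = p := by rw [Real.sqrt_sq hp.le]
  · have hct0 : 0 ≤ Real.sqrt (2*M/ρ)/(2*M-r₀) * p :=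
      mul_nonneg (div_nonneg (Real.sqrt_nonneg _) h2M.le) hp.le
    have hCt : ((Real.sqrt (2*M/ρ)/(2*M-r₀)) * p)^2 = (2*M/ρ)/(2*M-r₀)^2 * p^2 := by
      rw [mul_pow, div_pow, Real.sq_sqrt (by positivity)]
    have hfac : ρ*(2*M-r₀)^2 ≤ r*(2*M-r)^2 := mul_le_mul hρr e1 (by positivity) hr.le
    have hT2 : T^2 ≤ ((Real.sqrt (2*M/ρ)/(2*M-r₀)) * p)^2 := by
      rw [hCt, div_div, div_mul_eq_mul_div, le_div_iff₀ (by positivity)]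
      nlinarith [mul_le_mul_of_nonneg_left hfac (sq_nonneg T)]
    calc |T| = Real.sqrt (T^2) := (Real.sqrt_sq_eq_abs T).symm
    _ ≤ Real.sqrt (((Real.sqrt (2*M/ρ)/(2*M-r₀)) * p)^2) := Real.sqrt_le_sqrt hT2
    _ = (Real.sqrt (2*M/ρ)/(2*M-r₀)) * p := Real.sqrt_sq hct0
  · have hcx0 : 0 ≤ Real.sqrt (2*M/((2*M-r₀)*ρ^2)) * p :=
      mul_nonneg (Real.sqrt_nonneg _) hp.le
    have hCx : (Real.sqrt (2*M/((2*M-r₀)*ρ^2)) * p)^2 = 2*M/((2*M-r₀)*ρ^2) * p^2 := by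
      rw [mul_pow, Real.sq_sqrt (by positivity)]
    have hfac : ρ^2*(2*M-r₀) ≤ r^2*(2*M-r) :=
      mul_le_mul (by nlinarith) (by linarith) h2M.le (sq_nonneg r)
    have hn2 : n^2 ≤ (Real.sqrt (2*M/((2*M-r₀)*ρ^2)) * p)^2 := by
      rw [hCx, div_mul_eq_mul_div, le_div_iff₀ (by positivity)]
      nlinarith [mul_le_mul_of_nonneg_left hfac (sq_nonneg n)]
    calc n = Real.sqrt (n^2) := (Real.sqrt_sq hn).symm
    _ ≤ Real.sqrt ((Real.sqrt (2*M/((2*M-r₀)*ρ^2)) * p)^2) := Real.sqrt_le_sqrt hn2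
    _ = Real.sqrt (2*M/((2*M-r₀)*ρ^2)) * p := Real.sqrt_sq hcx0



/-- The Schwarzschild quadratic form of mass `M`, evaluated on a velocity `(t', x')`
at a point with spatial part `x` (where `0 < ‖x‖ < 2M`). -/
noncomputable def QM (M : ℝ) (t' : ℝ) (x' x : EuclideanSpace ℝ (Fin 3)) : ℝ :=
  (2 * M / ‖x‖ - 1) * t' ^ 2 + ‖x'‖ ^ 2
    - (2 * M / ((2 * M - ‖x‖) * ‖x‖ ^ 2)) * (inner ℝ x x' : ℝ) ^ 2

/-- Let `M > 0` and `r₀ ∈ (0, 2M)`. Let `b ∈ (0, ∞]`, and let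
`γ = (t, x) : [0, b) → ℝ × ℝ³` be a C¹ curve with `0 < ‖x(τ)‖ < 2M`,
`Q_M(t'(τ), x'(τ), x(τ)) = −1`, and `⟨x(τ), x'(τ)⟩ > 0` for every `τ ∈ [0, b)`,
with `‖x(0)‖ < r₀`. Assume `γ` is past-inextensible: if `b < ∞`, there is no
continuous map `γ̄ : [0, b] → ℝ × ℝ³` extending `γ` whose value at `b` has spatial
part of norm strictly between `0` and `2M`. Then there exists `τ ∈ (0, b)` with
`‖x(τ)‖ = r₀`; i.e., every past-inextensible unit-speed timelike curve starting in
the region `‖x‖ < r₀` intersects the hypersurface `S_{r₀}`. -/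
theorem past_inextensible_curve_meets_hypersurface (M : ℝ) (hM : 0 < M)
    (r₀ : ℝ) (hr₀ : 0 < r₀) (hr₀' : r₀ < 2 * M)
    (b : EReal) (hb : 0 < b)
    (t t' : ℝ → ℝ) (x x' : ℝ → EuclideanSpace ℝ (Fin 3))
    (ht : ∀ τ : ℝ, 0 ≤ τ → (τ : EReal) < b →
      HasDerivWithinAt t (t' τ) {σ : ℝ | 0 ≤ σ ∧ (σ : EReal) < b} τ)
    (hx : ∀ τ : ℝ, 0 ≤ τ → (τ : EReal) < b →
      HasDerivWithinAt x (x' τ) {σ : ℝ | 0 ≤ σ ∧ (σ : EReal) < b} τ)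
    (ht'c : ContinuousOn t' {σ : ℝ | 0 ≤ σ ∧ (σ : EReal) < b})
    (hx'c : ContinuousOn x' {σ : ℝ | 0 ≤ σ ∧ (σ : EReal) < b})
    (hr : ∀ τ : ℝ, 0 ≤ τ → (τ : EReal) < b → 0 < ‖x τ‖ ∧ ‖x τ‖ < 2 * M)
    (hQ : ∀ τ : ℝ, 0 ≤ τ → (τ : EReal) < b → QM M (t' τ) (x' τ) (x τ) = -1)
    (hpd : ∀ τ : ℝ, 0 ≤ τ → (τ : EReal) < b → (0 : ℝ) < inner ℝ (x τ) (x' τ))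
    (hx0 : ‖x 0‖ < r₀)
    (hinext : ∀ bR : ℝ, b = (bR : EReal) →
      ¬ ∃ γ' : ℝ → ℝ × EuclideanSpace ℝ (Fin 3),
        ContinuousOn γ' (Set.Icc 0 bR) ∧
        (∀ τ ∈ Set.Ico 0 bR, γ' τ = (t τ, x τ)) ∧
        0 < ‖(γ' bR).2‖ ∧ ‖(γ' bR).2‖ < 2 * M) :
    ∃ τ : ℝ, 0 < τ ∧ (τ : EReal) < b ∧ ‖x τ‖ = r₀ := by
  classical
  by_contra hcon
  push_neg at hcon
  set S : Set ℝ := {σ : ℝ | 0 ≤ σ ∧ (σ : EReal) < b} with hSdef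
  have h0S : (0:ℝ) ∈ S := ⟨le_refl 0, by exact_mod_cast hb⟩
  have hmem : ∀ {τ σ : ℝ}, σ ∈ S → 0 ≤ τ → τ ≤ σ → τ ∈ S := by
    intro τ σ hσ h0 hτσ
    exact ⟨h0, lt_of_le_of_lt (EReal.coe_le_coe_iff.mpr hτσ) hσ.2⟩
  have hIccS : ∀ {σ : ℝ}, σ ∈ S → Set.Icc 0 σ ⊆ S := fun hσ u hu => hmem hσ hu.1 hu.2
  have hconv : Convex ℝ S :=
    Set.OrdConnected.convex ⟨fun u hu v hv w hw => hmem hv (le_trans hu.1 hw.1) hw.2⟩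
  have hxc : ContinuousOn x S := fun τ hτ => (hx τ hτ.1 hτ.2).continuousWithinAt
  have htc : ContinuousOn t S := fun τ hτ => (ht τ hτ.1 hτ.2).continuousWithinAt
  have hrc : ContinuousOn (fun u => ‖x u‖) S := hxc.norm
  have H : ∀ τ ∈ S, ‖x τ‖ < r₀ := by
    intro τ hτ
    by_contra hge
    push_neg at hge
    have hsub := hIccS hτ
    obtain ⟨σ, hσIcc, hσ⟩ :=
      intermediate_value_Icc hτ.1 (hrc.mono hsub) (⟨hx0.le, hge⟩ : r₀ ∈ Set.Icc (‖x 0‖) (‖x τ‖))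
    have hσS := hsub hσIcc
    have hσ0 : 0 < σ := by
      rcases lt_or_eq_of_le hσIcc.1 with h | h
      · exact h
      · exact absurd hσ (by rw [← h]; exact ne_of_lt hx0)
    exact hcon σ hσ0 hσS.2 hσ
  have hsder : ∀ τ ∈ S, HasDerivWithinAt (fun u => ‖x u‖^2)
      (2 * (inner ℝ (x τ) (x' τ) : ℝ)) S τ := by
    intro τ hτ
    have h1 := HasDerivWithinAt.inner ℝ (hx τ hτ.1 hτ.2) (hx τ hτ.1 hτ.2)
    have heq : (fun u => (inner ℝ (x u) (x u) : ℝ)) = fun u => ‖x u‖^2 := by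
      funext u; exact real_inner_self_eq_norm_sq _
    rw [heq] at h1
    refine h1.congr_deriv ?_
    rw [real_inner_comm (x' τ) (x τ)]
    ring
  have hsmono : StrictMonoOn (fun u => ‖x u‖^2) S := by
    apply strictMonoOn_of_hasDerivWithinAt_pos hconv (hrc.pow 2)
      (fun u hu => (hsder u (interior_subset hu)).mono interior_subset)
    intro u hu
    have := hpd u (interior_subset hu).1 (interior_subset hu).2
    linarith
  have hρ : 0 < ‖x 0‖ := (hr 0 h0S.1 h0S.2).1
  have hρle : ∀ τ ∈ S, ‖x 0‖ ≤ ‖x τ‖ := by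
    intro τ hτ
    rcases eq_or_lt_of_le hτ.1 with h | h
    · rw [← h]
    · have h2 : ‖x 0‖^2 < ‖x τ‖^2 := hsmono h0S hτ h
      nlinarith [norm_nonneg (x 0), norm_nonneg (x τ)]
  have hmonoOn : MonotoneOn (fun u => ‖x u‖) S := by
    intro a ha c hc hac
    rcases eq_or_lt_of_le hac with h | h
    · rw [h]
    · have h2 : ‖x a‖^2 < ‖x c‖^2 := hsmono ha hc h
      simp only
      nlinarith [norm_nonneg (x a), norm_nonneg (x c)]
  set ρ := ‖x 0‖ with hρdef
  set c₀ := Real.sqrt (ρ*(2*M-r₀)) with hc₀def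
  set Ct := Real.sqrt (2*M/ρ)/(2*M-r₀) with hCtdef
  set Cx := Real.sqrt (2*M/((2*M-r₀)*ρ^2)) with hCxdef
  have hCt0 : 0 ≤ Ct := div_nonneg (Real.sqrt_nonneg _) (by linarith)
  have hCx0 : 0 ≤ Cx := Real.sqrt_nonneg _
  have hbnd : ∀ τ ∈ S, c₀ ≤ (inner ℝ (x τ) (x' τ) : ℝ) ∧
      |t' τ| ≤ Ct * (inner ℝ (x τ) (x' τ) : ℝ) ∧
      ‖x' τ‖ ≤ Cx * (inner ℝ (x τ) (x' τ) : ℝ) := by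
    intro τ hτ
    have hQτ := hQ τ hτ.1 hτ.2
    rw [QM] at hQτ
    have hcs : (inner ℝ (x τ) (x' τ) : ℝ)^2 ≤ ‖x τ‖^2 * ‖x' τ‖^2 := by
      have h' := real_inner_mul_inner_self_le (x τ) (x' τ)
      rw [real_inner_self_eq_norm_sq, real_inner_self_eq_norm_sq] at h'
      nlinarith [h']
    obtain ⟨k1, k2, k3⟩ := Qkey M (‖x τ‖) (t' τ) (‖x' τ‖) (inner ℝ (x τ) (x' τ) : ℝ)
      (hr τ hτ.1 hτ.2).1 (hr τ hτ.1 hτ.2).2 hQτ hcs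
    exact Bkey M ρ r₀ (‖x τ‖) (t' τ) (‖x' τ‖) (inner ℝ (x τ) (x' τ) : ℝ)
      hM hρ (hρle τ hτ) (H τ hτ).le hr₀' (hpd τ hτ.1 hτ.2) (norm_nonneg _) k1 k2 k3
  have hc₀pos : 0 < c₀ := Real.sqrt_pos.mpr (mul_pos hρ (by linarith))
  by_cases hbtop : b = ⊤
  · -- infinite case
    subst hbtop
    have hSI : ∀ u : ℝ, 0 ≤ u → u ∈ S := fun u hu => ⟨hu, EReal.coe_lt_top u⟩
    have hdiff : DifferentiableOn ℝ (fun u => ‖x u‖^2) (interior S) :=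
      fun u hu => ((hsder u (interior_subset hu)).differentiableWithinAt).mono interior_subset
    have hderge : ∀ u ∈ interior S, 2*c₀ ≤ deriv (fun u => ‖x u‖^2) u := by
      intro u hu
      have hD : HasDerivAt (fun u => ‖x u‖^2) (2 * (inner ℝ (x u) (x' u) : ℝ)) u :=
        (hsder u (interior_subset hu)).hasDerivAt (mem_interior_iff_mem_nhds.1 hu)
      rw [hD.deriv]
      have := (hbnd u (interior_subset hu)).1
      linarith
    set τs := r₀^2/c₀ with hτs
    have hτs0 : 0 ≤ τs := by positivity
    have hgrow := hconv.mul_sub_le_image_sub_of_le_deriv (hrc.pow 2) hdiff hderge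
      0 h0S τs (hSI τs hτs0) hτs0
    have hlt : ‖x τs‖^2 < r₀^2 := by
      have h1 := H τs (hSI τs hτs0)
      nlinarith [norm_nonneg (x τs)]
    have hval : 2*c₀ * (τs - 0) = 2*r₀^2 := by
      rw [hτs]; field_simp; ring
    simp only [Pi.pow_apply] at hgrow
    nlinarith [norm_nonneg (x 0), sq_nonneg (‖x 0‖)]
  · -- finite case
    have hbbot : b ≠ ⊥ := ne_bot_of_gt hb
    obtain ⟨bR, rfl⟩ : ∃ bR : ℝ, b = (bR : EReal) := ⟨b.toReal, (EReal.coe_toReal hbtop hbbot).symm⟩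
    have hbR : 0 < bR := by exact_mod_cast hb
    have hmemS : ∀ {u : ℝ}, 0 ≤ u → u < bR → u ∈ S := fun {u} h1 h2 => ⟨h1, by exact_mod_cast h2⟩
    have hltbR : ∀ {u : ℝ}, u ∈ S → u < bR := fun {u} hu => by exact_mod_cast hu.2
    set γ : ℝ → ℝ × EuclideanSpace ℝ (Fin 3) := fun τ => (t τ, x τ) with hγdef
    set K := (max Ct Cx) * r₀ with hKdef
    have hK0 : 0 ≤ K := mul_nonneg (le_trans hCt0 (le_max_left _ _)) hr₀.le
    -- derivative of the radius
    have hrd : ∀ τ ∈ S, HasDerivWithinAt (fun u => ‖x u‖)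
        ((inner ℝ (x τ) (x' τ) : ℝ) / ‖x τ‖) S τ := by
      intro τ hτ
      have hxτ : ‖x τ‖ ≠ 0 := (hr τ hτ.1 hτ.2).1.ne'
      have hsτ : ‖x τ‖^2 ≠ 0 := pow_ne_zero 2 hxτ
      have hsqrt := (Real.hasDerivAt_sqrt hsτ).comp_hasDerivWithinAt τ (hsder τ hτ)
      have heq : (Real.sqrt ∘ fun u => ‖x u‖^2) = fun u => ‖x u‖ := by
        funext u; simp [Function.comp, Real.sqrt_sq (norm_nonneg _)]
      rw [heq] at hsqrt
      refine hsqrt.congr_deriv ?_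
      rw [Real.sqrt_sq (norm_nonneg _)]
      field_simp
    -- master Lipschitz-type estimate
    have master : ∀ σ ∈ S, ∀ τ₁ ∈ S, σ ≤ τ₁ →
        dist (γ τ₁) (γ σ) ≤ K * (‖x τ₁‖ - ‖x σ‖) := by
      intro σ hσ τ₁ hτ₁ hστ
      have hIccsub : Set.Icc σ τ₁ ⊆ S := fun u hu => hmem hτ₁ (le_trans hσ.1 hu.1) hu.2
      have hnhds : ∀ u ∈ S, S ∈ 𝓝[Set.Ici u] u := by
        intro u hu
        rw [mem_nhdsWithin]
        exact ⟨Set.Iio bR, isOpen_Iio, hltbR hu,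
          fun w hw => hmemS (le_trans hu.1 hw.2) hw.1⟩
      have hf' : ∀ u ∈ Set.Ico σ τ₁,
          HasDerivWithinAt (fun u => γ u - γ σ) (t' u, x' u) (Set.Ici u) u := by
        intro u hu
        have huS : u ∈ S := hIccsub ⟨hu.1, hu.2.le⟩
        exact (((ht u huS.1 huS.2).prodMk (hx u huS.1 huS.2)).sub_const (γ σ)).mono_of_mem_nhdsWithin
          (hnhds u huS)
      have hB' : ∀ u ∈ Set.Ico σ τ₁,
          HasDerivWithinAt (fun u => K * (‖x u‖ - ‖x σ‖))
            (K * ((inner ℝ (x u) (x' u) : ℝ) / ‖x u‖)) (Set.Ici u) u := by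
        intro u hu
        have huS : u ∈ S := hIccsub ⟨hu.1, hu.2.le⟩
        exact (((hrd u huS).sub_const (‖x σ‖)).const_mul K).mono_of_mem_nhdsWithin (hnhds u huS)
      have bound : ∀ u ∈ Set.Ico σ τ₁,
          ‖((t' u, x' u) : ℝ × EuclideanSpace ℝ (Fin 3))‖ ≤
            K * ((inner ℝ (x u) (x' u) : ℝ) / ‖x u‖) := by
        intro u hu
        have huS : u ∈ S := hIccsub ⟨hu.1, hu.2.le⟩
        obtain ⟨b1, b2, b3⟩ := hbnd u huS
        have hru : 0 < ‖x u‖ := (hr u huS.1 huS.2).1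
        have hpu : 0 < (inner ℝ (x u) (x' u) : ℝ) := hpd u huS.1 huS.2
        have hq : 0 < (inner ℝ (x u) (x' u) : ℝ) / ‖x u‖ := div_pos hpu hru
        have hxr : ‖x u‖ ≤ r₀ := (H u huS).le
        have hpe : (inner ℝ (x u) (x' u) : ℝ) =
            ‖x u‖ * ((inner ℝ (x u) (x' u) : ℝ) / ‖x u‖) := by field_simp
        rw [Prod.norm_def]
        apply max_le
        · rw [Real.norm_eq_abs]
          calc |t' u| ≤ Ct * (inner ℝ (x u) (x' u) : ℝ) := b2
          _ = Ct * ‖x u‖ * ((inner ℝ (x u) (x' u) : ℝ) / ‖x u‖) := by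
              rw [mul_assoc, ← hpe]
          _ ≤ (max Ct Cx) * r₀ * ((inner ℝ (x u) (x' u) : ℝ) / ‖x u‖) := by
              apply mul_le_mul_of_nonneg_right _ hq.le
              exact mul_le_mul (le_max_left _ _) hxr hru.le (le_trans hCt0 (le_max_left _ _))
          _ = K * ((inner ℝ (x u) (x' u) : ℝ) / ‖x u‖) := rfl
        · calc ‖x' u‖ ≤ Cx * (inner ℝ (x u) (x' u) : ℝ) := b3
          _ = Cx * ‖x u‖ * ((inner ℝ (x u) (x' u) : ℝ) / ‖x u‖) := by
              rw [mul_assoc, ← hpe]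
          _ ≤ (max Ct Cx) * r₀ * ((inner ℝ (x u) (x' u) : ℝ) / ‖x u‖) := by
              apply mul_le_mul_of_nonneg_right _ hq.le
              exact mul_le_mul (le_max_right _ _) hxr hru.le (le_trans hCt0 (le_max_left _ _))
          _ = K * ((inner ℝ (x u) (x' u) : ℝ) / ‖x u‖) := rfl
      have hcont : ContinuousOn (fun u => γ u - γ σ) (Set.Icc σ τ₁) :=
        (((htc.mono hIccsub).prodMk (hxc.mono hIccsub)).sub continuousOn_const)
      have hBcont : ContinuousOn (fun u => K * (‖x u‖ - ‖x σ‖)) (Set.Icc σ τ₁) :=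
        (continuousOn_const.mul ((hrc.mono hIccsub).sub continuousOn_const))
      have ha : ‖γ σ - γ σ‖ ≤ K * (‖x σ‖ - ‖x σ‖) := by simp
      have est := image_norm_le_of_norm_deriv_right_le_deriv_boundary'
        hcont hf' ha hBcont hB' bound (Set.right_mem_Icc.2 hστ)
      rw [dist_eq_norm]
      exact est
    -- limit of the radius
    have hSIoo : Set.Ioo (0:ℝ) bR ⊆ S := fun u hu => hmemS hu.1.le hu.2
    have hmonoIoo : MonotoneOn (fun u => ‖x u‖) (Set.Ioo 0 bR) := hmonoOn.mono hSIoo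
    have hbdd : BddAbove ((fun u => ‖x u‖) '' Set.Ioo 0 bR) := by
      refine ⟨r₀, ?_⟩
      rintro _ ⟨u, hu, rfl⟩
      exact (H u (hSIoo hu)).le
    have hne : (Set.Ioo (0:ℝ) bR).Nonempty := ⟨bR/2, by constructor <;> linarith⟩
    have hrlim := MonotoneOn.tendsto_nhdsWithin_Ioo_left hne hmonoIoo hbdd
    set L := sSup ((fun u => ‖x u‖) '' Set.Ioo 0 bR) with hLdef
    have hrleL : ∀ u ∈ S, ‖x u‖ ≤ L := by
      intro u hu
      have hub : u < bR := hltbR hu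
      set v := (max u (bR/2) + bR)/2 with hvdef
      have hv1 : 0 < v := by
        have := le_max_right u (bR/2); rw [hvdef]; linarith
      have hv2 : v < bR := by
        have := max_lt hub (by linarith : bR/2 < bR); rw [hvdef]; linarith
      have huv : u ≤ v := by
        have := le_max_left u (bR/2); rw [hvdef]; linarith
      calc ‖x u‖ ≤ ‖x v‖ := hmonoOn hu (hmemS hv1.le hv2) huv
      _ ≤ L := le_csSup hbdd ⟨v, ⟨hv1, hv2⟩, rfl⟩
    -- Cauchy
    have hcauchy : Cauchy (Filter.map γ (𝓝[<] bR)) := by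
      rw [Metric.cauchy_iff]
      refine ⟨Filter.map_neBot, ?_⟩
      intro ε hε
      have hδ : 0 < ε/(2*(K+1)) := by positivity
      have hev : ∀ᶠ u in 𝓝[<] bR, L - ε/(2*(K+1)) < ‖x u‖ :=
        hrlim.eventually (eventually_gt_nhds (by linarith))
      obtain ⟨σ, hσgt, hσIoo⟩ := (hev.and (Ioo_mem_nhdsLT hbR)).exists
      have hσS : σ ∈ S := hSIoo hσIoo
      have hd : ∀ a c : ℝ, a ∈ Set.Ioo σ bR → c ∈ Set.Ioo σ bR → a ≤ c →
          dist (γ a) (γ c) < ε := by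
        intro a c ha hc hac
        have haS : a ∈ S := hmemS (hσIoo.1.trans ha.1).le ha.2
        have hcS : c ∈ S := hmemS (hσIoo.1.trans hc.1).le hc.2
        have h1 := master a haS c hcS hac
        have h2 : ‖x σ‖ ≤ ‖x a‖ := hmonoOn hσS haS ha.1.le
        have h3 : ‖x c‖ ≤ L := hrleL c hcS
        have h4 : ‖x c‖ - ‖x a‖ ≤ ε/(2*(K+1)) := by linarith
        have h5 : K * (‖x c‖ - ‖x a‖) ≤ K * (ε/(2*(K+1))) :=
          mul_le_mul_of_nonneg_left h4 hK0
        have h6 : K * (ε/(2*(K+1))) ≤ (K+1) * (ε/(2*(K+1))) :=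
          mul_le_mul_of_nonneg_right (by linarith) hδ.le
        have h7 : (K+1) * (ε/(2*(K+1))) = ε/2 := by
          field_simp
        rw [dist_comm]
        calc dist (γ c) (γ a) ≤ K * (‖x c‖ - ‖x a‖) := h1
        _ ≤ ε/2 := by rw [← h7]; linarith
        _ < ε := by linarith
      refine ⟨γ '' Set.Ioo σ bR, Filter.image_mem_map (Ioo_mem_nhdsLT hσIoo.2), ?_⟩
      rintro _ ⟨a, ha, rfl⟩ _ ⟨c, hc, rfl⟩
      rcases le_total a c with h | h
      · exact hd a c ha hc h
      · rw [dist_comm]; exact hd c a hc ha h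
    obtain ⟨P, hPlim⟩ := cauchy_map_iff_exists_tendsto.mp hcauchy
    have hxlim : Filter.Tendsto x (𝓝[<] bR) (𝓝 P.2) := by
      have := (continuous_snd.tendsto P).comp hPlim
      exact this
    have hnormlim : Filter.Tendsto (fun τ => ‖x τ‖) (𝓝[<] bR) (𝓝 ‖P.2‖) := hxlim.norm
    have hmemev : ∀ᶠ u in 𝓝[<] bR, u ∈ Set.Ioo 0 bR := Ioo_mem_nhdsLT hbR
    have hXub : ‖P.2‖ ≤ r₀ :=
      le_of_tendsto hnormlim (hmemev.mono fun u hu => (H u (hSIoo hu)).le)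
    have hXlb : ρ ≤ ‖P.2‖ :=
      ge_of_tendsto hnormlim (hmemev.mono fun u hu => hρle u (hSIoo hu))
    refine absurd ?_ (hinext bR rfl)
    refine ⟨fun τ => if τ = bR then P else (t τ, x τ), ?_, ?_, ?_, ?_⟩
    · intro τ₀ hτ₀
      rcases eq_or_lt_of_le hτ₀.2 with heq | hlt
      · subst heq
        have hval : (fun τ => if τ = τ₀ then P else (t τ, x τ)) τ₀ = P := if_pos rfl
        unfold ContinuousWithinAt
        rw [hval]
        have hsub2 : 𝓝[Set.Icc 0 τ₀] τ₀ ≤ 𝓝[Set.Iio τ₀] τ₀ ⊔ 𝓝[{τ₀}] τ₀ := by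
          rw [← nhdsWithin_union]
          apply nhdsWithin_mono
          intro u hu
          rcases lt_or_eq_of_le hu.2 with h | h
          · exact Or.inl h
          · exact Or.inr h
        apply Filter.Tendsto.mono_left _ hsub2
        rw [tendsto_sup]
        constructor
        · apply hPlim.congr'
          filter_upwards [self_mem_nhdsWithin] with u hu
          rw [if_neg (ne_of_lt hu)]
        · rw [nhdsWithin_singleton]
          have h8 := tendsto_pure_nhds (fun τ => if τ = τ₀ then P else (t τ, x τ)) τ₀
          simp only [if_pos rfl] at h8
          exact h8
      · have hτ₀S : τ₀ ∈ S := hmemS hτ₀.1 hlt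
        have hγcw : ContinuousWithinAt γ S τ₀ :=
          ((htc τ₀ hτ₀S).prodMk (hxc τ₀ hτ₀S))
        have hIcoMem : S ∈ 𝓝[Set.Icc 0 bR] τ₀ := by
          rw [mem_nhdsWithin]
          exact ⟨Set.Iio bR, isOpen_Iio, hlt, fun w hw => hmemS hw.2.1 hw.1⟩
        have h2 : ContinuousWithinAt γ (Set.Icc 0 bR) τ₀ :=
          hγcw.mono_of_mem_nhdsWithin hIcoMem
        apply h2.congr_of_eventuallyEq
        · filter_upwards [hIcoMem] with u hu
          rw [if_neg (hltbR hu).ne]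
        · rw [if_neg hlt.ne]
    · intro τ hτ
      beta_reduce
      rw [if_neg hτ.2.ne]
    · beta_reduce
      rw [if_pos rfl]
      exact lt_of_lt_of_le hρ hXlb
    · beta_reduce
      rw [if_pos rfl]
      exact lt_of_le_of_lt hXub hr₀'
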